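/- Define ψ : ℝ² → ℝ by ψ(x) = (max(1 − |x|², 0))⁴, where |x| is the Euclidean norm. Then ψ is twice continuously differentiable on ℝ², the product ψ_{x₁}(x) ψ_{x₂}(x) ψ_{x₁x₂}(x) is nonnegative for every x ∈ ℝ², and ∫_{ℝ²} ψ_{x₁} ψ_{x₂} ψ_{x₁x₂} dx > 0. -/

import Mathlib

open MeasureTheory

/-- Partial derivative in the `i`-th coordinate direction of `f : ℝ² → ℝ`. -/
noncomputable def pd (i : Fin 2) (f : EuclideanSpace ℝ (Fin 2) → ℝ) :
    EuclideanSpace ℝ (Fin 2) → ℝ :=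
  fun x => fderiv ℝ f x (EuclideanSpace.single i 1)

/-- `ψ(x) = (max(1 − |x|², 0))⁴`. -/
noncomputable def psi : EuclideanSpace ℝ (Fin 2) → ℝ :=
  fun x => (max (1 - ‖x‖ ^ 2) 0) ^ 4

open Filter Topology

noncomputable def mx : ℝ → ℝ := fun t => max t 0

lemma mx_nonneg (t : ℝ) : 0 ≤ mx t := le_max_right _ _
lemma mx_abs_le (t : ℝ) : mx t ≤ |t| := max_le (le_abs_self t) (abs_nonneg t)
lemma mx_cont : Continuous mx := continuous_id.max continuous_const

lemma hasDerivAt_mx_pow (k : ℕ) (t : ℝ) :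
    HasDerivAt (fun s => mx s ^ (k + 2)) ((k + 2) * mx t ^ (k + 1)) t := by
  rcases lt_trichotomy t 0 with ht | rfl | ht
  · have h0 : mx t = 0 := max_eq_right ht.le
    have hev : (fun s => mx s ^ (k + 2)) =ᶠ[𝓝 t] fun _ => (0:ℝ) := by
      filter_upwards [eventually_lt_nhds ht] with s hs
      simp [mx, max_eq_right hs.le]
    have := (hasDerivAt_const t (0:ℝ)).congr_of_eventuallyEq hev
    simpa [h0] using this
  · rw [hasDerivAt_iff_tendsto_slope]
    have h0 : mx 0 = 0 := by simp [mx]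
    have hb : ∀ s : ℝ, ‖slope (fun s => mx s ^ (k + 2)) 0 s‖ ≤ |s| ^ (k + 1) := by
      intro s
      rcases eq_or_ne s 0 with rfl | hs
      · simp [slope]
      · have : slope (fun s => mx s ^ (k + 2)) 0 s = mx s ^ (k + 2) / s := by
          simp [slope, h0, div_eq_inv_mul]
        rw [this, Real.norm_eq_abs, abs_div]
        have h1 : |mx s ^ (k + 2)| = mx s ^ (k+2) := abs_of_nonneg (pow_nonneg (mx_nonneg s) _)
        rw [h1]
        rw [div_le_iff₀ (abs_pos.2 hs)]
        calc mx s ^ (k + 2) ≤ |s| ^ (k + 2) :=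
              pow_le_pow_left₀ (mx_nonneg s) (mx_abs_le s) _
          _ = |s| ^ (k + 1) * |s| := by ring
    have hg : Tendsto (fun s : ℝ => |s| ^ (k + 1)) (𝓝[≠] (0:ℝ)) (𝓝 0) := by
      have := ((continuous_abs.pow (k+1)).tendsto (0:ℝ)).mono_left
        (nhdsWithin_le_nhds (s := {(0:ℝ)}ᶜ))
      convert this using 2
      show (0:ℝ) = |(0:ℝ)| ^ (k + 1)
      simp
      rfl
    have := squeeze_zero_norm hb hg
    simpa [h0] using this
  · have h0 : mx t = t := max_eq_left ht.le
    have hev : (fun s => mx s ^ (k + 2)) =ᶠ[𝓝 t] fun s => s ^ (k + 2) := by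
      filter_upwards [eventually_gt_nhds ht] with s hs
      simp [mx, max_eq_left hs.le]
    have := (hasDerivAt_pow (k + 2) t).congr_of_eventuallyEq hev
    push_cast
    simpa [h0] using this

lemma hasDerivAt_mx4 (t : ℝ) : HasDerivAt (fun s => mx s ^ 4) (4 * mx t ^ 3) t := by
  have := hasDerivAt_mx_pow 2 t
  norm_num at this ⊢
  exact this

lemma hasDerivAt_mx3 (t : ℝ) : HasDerivAt (fun s => mx s ^ 3) (3 * mx t ^ 2) t := by
  have := hasDerivAt_mx_pow 1 t
  norm_num at this ⊢
  exact this

lemma deriv_mx4 : deriv (fun t => mx t ^ 4) = fun t => 4 * mx t ^ 3 :=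
  funext fun t => (hasDerivAt_mx4 t).deriv

lemma contDiff_mx4 : ContDiff ℝ 2 (fun t : ℝ => mx t ^ 4) := by
  rw [show (2 : WithTop ℕ∞) = 1 + 1 from rfl, contDiff_succ_iff_deriv]
  refine ⟨fun t => (hasDerivAt_mx4 t).differentiableAt, by simp, ?_⟩
  rw [deriv_mx4, contDiff_one_iff_deriv]
  constructor
  · exact fun t => ((hasDerivAt_mx3 t).const_mul 4).differentiableAt
  · have : deriv (fun t => 4 * mx t ^ 3) = fun t => 12 * mx t ^ 2 := by
      funext t
      have := ((hasDerivAt_mx3 t).const_mul 4).deriv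
      rw [this]; ring
    rw [this]
    exact continuous_const.mul (mx_cont.pow 2)

noncomputable def vv : EuclideanSpace ℝ (Fin 2) → ℝ := fun x => 1 - ‖x‖ ^ 2
noncomputable def Mm : EuclideanSpace ℝ (Fin 2) → ℝ := fun x => mx (vv x)

lemma vv_cont : Continuous vv := continuous_const.sub (continuous_norm.pow 2)
lemma Mm_cont : Continuous Mm := mx_cont.comp vv_cont
lemma Mm_nonneg (x : EuclideanSpace ℝ (Fin 2)) : 0 ≤ Mm x := mx_nonneg _

lemma hasFDerivAt_vv (x : EuclideanSpace ℝ (Fin 2)) :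
    HasFDerivAt vv (-(2 • (innerSL ℝ x))) x :=
  (hasStrictFDerivAt_norm_sq x).hasFDerivAt.const_sub 1

lemma hasFDerivAt_psi (x : EuclideanSpace ℝ (Fin 2)) :
    HasFDerivAt psi
      ((4 * Mm x ^ 3) • (-(2 • (innerSL ℝ x)) : EuclideanSpace ℝ (Fin 2) →L[ℝ] ℝ)) x := by
  exact (hasDerivAt_mx4 (vv x)).comp_hasFDerivAt x (hasFDerivAt_vv x)

lemma contDiff_psi : ContDiff ℝ 2 psi := by
  exact contDiff_mx4.comp (contDiff_const.sub (contDiff_norm_sq ℝ))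

lemma pd_psi (i : Fin 2) (x : EuclideanSpace ℝ (Fin 2)) :
    pd i psi x = -8 * x i * Mm x ^ 3 := by
  have h := (hasFDerivAt_psi x).fderiv
  simp only [pd, h]
  have hi : (innerSL ℝ) x (EuclideanSpace.single i 1) = x i := by
    simp [EuclideanSpace.inner_single_right]
  simp only [ContinuousLinearMap.smul_apply, ContinuousLinearMap.neg_apply,
    ContinuousLinearMap.smul_apply, hi, smul_eq_mul]
  push_cast
  ring

lemma pd0_eq : pd 0 psi = fun x => -8 * x 0 * Mm x ^ 3 := funext (pd_psi 0)

lemma hasFDerivAt_Mm3 (x : EuclideanSpace ℝ (Fin 2)) :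
    HasFDerivAt (fun y => Mm y ^ 3)
      ((3 * Mm x ^ 2) • (-(2 • (innerSL ℝ x)) : EuclideanSpace ℝ (Fin 2) →L[ℝ] ℝ)) x := by
  exact (hasDerivAt_mx3 (vv x)).comp_hasFDerivAt x (hasFDerivAt_vv x)

lemma hasFDerivAt_c (x : EuclideanSpace ℝ (Fin 2)) :
    HasFDerivAt (fun y : EuclideanSpace ℝ (Fin 2) => -8 * y 0)
      ((-8 : ℝ) • (EuclideanSpace.proj (0 : Fin 2) : EuclideanSpace ℝ (Fin 2) →L[ℝ] ℝ)) x := by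
  exact HasFDerivAt.const_mul (𝕜 := ℝ) (EuclideanSpace.proj (0 : Fin 2)).hasFDerivAt (-8 : ℝ)

lemma pd10 (x : EuclideanSpace ℝ (Fin 2)) :
    pd 1 (pd 0 psi) x = 48 * x 0 * x 1 * Mm x ^ 2 := by
  have hmul := (hasFDerivAt_c x).mul (hasFDerivAt_Mm3 x)
  rw [pd, pd0_eq]
  rw [show (fun x : EuclideanSpace ℝ (Fin 2) => -8 * x 0 * Mm x ^ 3) =
      ((fun y : EuclideanSpace ℝ (Fin 2) => -8 * y 0) * fun y => Mm y ^ 3) from rfl, hmul.fderiv]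
  have hi : (innerSL ℝ) x (EuclideanSpace.single (1 : Fin 2) 1) = x 1 := by
    simp [EuclideanSpace.inner_single_right]
  have hp : (EuclideanSpace.proj (0 : Fin 2) : EuclideanSpace ℝ (Fin 2) →L[ℝ] ℝ)
      (EuclideanSpace.single (1 : Fin 2) 1) = 0 := by
    simp [EuclideanSpace.single_apply]
  simp only [ContinuousLinearMap.add_apply, ContinuousLinearMap.smul_apply,
    ContinuousLinearMap.neg_apply, hi, hp, smul_eq_mul]
  push_cast
  ring

lemma pdprod_eq (x : EuclideanSpace ℝ (Fin 2)) :
    pd 0 psi x * pd 1 psi x * pd 1 (pd 0 psi) x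
      = 3072 * (x 0) ^ 2 * (x 1) ^ 2 * Mm x ^ 8 := by
  rw [pd_psi 0 x, pd_psi 1 x, pd10 x]; ring

lemma g_cont : Continuous fun x : EuclideanSpace ℝ (Fin 2) =>
    3072 * (x 0) ^ 2 * (x 1) ^ 2 * Mm x ^ 8 := by
  have h0 : Continuous fun x : EuclideanSpace ℝ (Fin 2) => x 0 :=
    (EuclideanSpace.proj (0 : Fin 2)).continuous
  have h1 : Continuous fun x : EuclideanSpace ℝ (Fin 2) => x 1 :=
    (EuclideanSpace.proj (1 : Fin 2)).continuous
  exact ((continuous_const.mul (h0.pow 2)).mul (h1.pow 2)).mul (Mm_cont.pow 8)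

lemma g_compact_support : HasCompactSupport fun x : EuclideanSpace ℝ (Fin 2) =>
    3072 * (x 0) ^ 2 * (x 1) ^ 2 * Mm x ^ 8 := by
  apply HasCompactSupport.intro (isCompact_closedBall (0 : EuclideanSpace ℝ (Fin 2)) 1)
  intro x hx
  rw [Metric.mem_closedBall, dist_zero_right, not_le] at hx
  have hM : Mm x = 0 := by
    have : 1 - ‖x‖ ^ 2 ≤ 0 := by nlinarith
    exact max_eq_right this
  rw [hM]
  ring

theorem stmt7 :
    ContDiff ℝ 2 psi ∧
    (∀ x : EuclideanSpace ℝ (Fin 2),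
      0 ≤ pd 0 psi x * pd 1 psi x * pd 1 (pd 0 psi) x) ∧
    0 < ∫ x, pd 0 psi x * pd 1 psi x * pd 1 (pd 0 psi) x := by
  refine ⟨contDiff_psi, ?_, ?_⟩
  · intro x
    rw [pdprod_eq x]
    positivity
  · simp only [pdprod_eq]
    have hnn : (0 : EuclideanSpace ℝ (Fin 2) → ℝ) ≤
        fun x => 3072 * (x 0) ^ 2 * (x 1) ^ 2 * Mm x ^ 8 := by
      intro x; positivity
    have hint : Integrable (fun x : EuclideanSpace ℝ (Fin 2) =>
        3072 * (x 0) ^ 2 * (x 1) ^ 2 * Mm x ^ 8) := by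
      exact g_cont.integrable_of_hasCompactSupport g_compact_support
    rw [integral_pos_iff_support_of_nonneg hnn hint]
    -- the support contains a nonempty open set
    set U : Set (EuclideanSpace ℝ (Fin 2)) :=
      {x | 0 < vv x} ∩ ({x | x 0 ≠ 0} ∩ {x | x 1 ≠ 0}) with hU
    have hUopen : IsOpen U := by
      apply IsOpen.inter (isOpen_lt continuous_const vv_cont)
      apply IsOpen.inter
      · exact isOpen_compl_singleton.preimage (EuclideanSpace.proj (0 : Fin 2)).continuous
      · exact isOpen_compl_singleton.preimage (EuclideanSpace.proj (1 : Fin 2)).continuous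
    have hsub : U ⊆ Function.support fun x => 3072 * (x 0) ^ 2 * (x 1) ^ 2 * Mm x ^ 8 := by
      rintro x ⟨hv, hx0, hx1⟩
      have hMpos : 0 < Mm x := lt_max_of_lt_left hv
      exact mul_ne_zero (mul_ne_zero (mul_ne_zero (by norm_num) (pow_ne_zero 2 hx0))
        (pow_ne_zero 2 hx1)) (ne_of_gt (pow_pos hMpos 8))
    have hpt : ((WithLp.equiv 2 (Fin 2 → ℝ)).symm ![1/2, 1/2]) ∈ U := by
      set a : EuclideanSpace ℝ (Fin 2) := (WithLp.equiv 2 (Fin 2 → ℝ)).symm ![1/2, 1/2] with ha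
      have ha0 : a 0 = 1/2 := rfl
      have ha1 : a 1 = 1/2 := rfl
      have hnorm : ‖a‖ ^ 2 = 1/2 := by
        rw [EuclideanSpace.norm_eq]
        rw [Real.sq_sqrt (by positivity)]
        simp [Fin.sum_univ_two, ha0, ha1]
        norm_num
      refine ⟨?_, by rw [Set.mem_setOf_eq, ha0]; norm_num,
        by rw [Set.mem_setOf_eq, ha1]; norm_num⟩
      rw [Set.mem_setOf_eq]
      unfold vv
      rw [hnorm]
      norm_num
    calc (0 : ENNReal) < volume U := hUopen.measure_pos volume ⟨_, hpt⟩
      _ ≤ _ := measure_mono hsub
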